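/- Let q = N(μ, Σ) and p = N(μ₀, Σ₀) be Gaussians on ℝ^P, and suppose Σ = V_B M V_B^T for an orthonormal P×(P−N) matrix V_B and symmetric PSD M ∈ ℝ^{(P−N)×(P−N)}. Then the principal square root of Σ is V_B M^{1/2} V_B^T, and the principal square root of Σ^{1/2} Σ₀ Σ^{1/2} is V_B (M^{1/2} V_B^T Σ₀ V_B M^{1/2})^{1/2} V_B^T; consequently tr((Σ^{1/2} Σ₀ Σ^{1/2})^{1/2}) = tr((M^{1/2} V_B^T Σ₀ V_B M^{1/2})^{1/2}). -/

import Mathlib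

open Matrix

/-- The principal square root of a positive semidefinite matrix, as defined in Mathlib
(December 2024) under the name `Matrix.PosSemidef.sqrt`, since removed. -/
noncomputable def Matrix.PosSemidef.sqrt {n 𝕜 : Type*} [Fintype n] [RCLike 𝕜] [PartialOrder 𝕜] [DecidableEq n]
    {A : Matrix n n 𝕜} (hA : A.PosSemidef) : Matrix n n 𝕜 :=
  hA.1.eigenvectorUnitary.1 * diagonal ((↑) ∘ (√·) ∘ hA.1.eigenvalues) *
    (star hA.1.eigenvectorUnitary : Matrix n n 𝕜)

open scoped MatrixOrder in
theorem Matrix.PosSemidef.sqrt_eq_cfcSqrt {n : Type*} [Fintype n] [DecidableEq n]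
    {A : Matrix n n ℝ} (hA : A.PosSemidef) : hA.sqrt = CFC.sqrt A := by
  rw [CFC.sqrt_eq_cfc, cfc_nnreal_eq_real _ A hA.nonneg, hA.1.cfc_eq]
  simp only [IsHermitian.cfc, Matrix.PosSemidef.sqrt, Unitary.conjStarAlgAut_apply]
  congr
  funext i
  rcases le_total 0 i with h | h <;> simp [h, Real.sqrt_eq_zero_of_nonpos]

open scoped MatrixOrder in
theorem Matrix.PosSemidef.posSemidef_sqrt {n : Type*} [Fintype n] [DecidableEq n]
    {A : Matrix n n ℝ} (hA : A.PosSemidef) : hA.sqrt.PosSemidef := by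
  rw [hA.sqrt_eq_cfcSqrt]
  exact (CFC.sqrt_nonneg A).posSemidef

open scoped MatrixOrder in
theorem Matrix.PosSemidef.sq_sqrt {n : Type*} [Fintype n] [DecidableEq n]
    {A : Matrix n n ℝ} (hA : A.PosSemidef) : hA.sqrt ^ 2 = A := by
  rw [hA.sqrt_eq_cfcSqrt]
  exact CFC.sq_sqrt A hA.nonneg

open scoped MatrixOrder in
theorem Matrix.PosSemidef.eq_sqrt_of_sq_eq {n : Type*} [Fintype n] [DecidableEq n]
    {A B : Matrix n n ℝ} (hB : B.PosSemidef) (hA : A.PosSemidef) (h : B ^ 2 = A) :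
    B = hA.sqrt := by
  rw [hA.sqrt_eq_cfcSqrt, ← h]
  exact (CFC.sqrt_sq B hB.nonneg).symm

/-- If `Σ = V_B M V_Bᵀ` with `V_B` having orthonormal columns and `M` symmetric PSD,
then the principal square root of `Σ` is `V_B M^{1/2} V_Bᵀ`, the principal square
root of `Σ^{1/2} Σ₀ Σ^{1/2}` is `V_B (M^{1/2} V_BᵀΣ₀V_B M^{1/2})^{1/2} V_Bᵀ`, and
hence `tr((Σ^{1/2}Σ₀Σ^{1/2})^{1/2}) = tr((M^{1/2} V_BᵀΣ₀V_B M^{1/2})^{1/2})`. -/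
theorem stmt19 {P N : ℕ}
    (VB : Matrix (Fin P) (Fin (P - N)) ℝ) (hVB : VBᵀ * VB = 1)
    (M : Matrix (Fin (P - N)) (Fin (P - N)) ℝ) (hM : M.PosSemidef)
    (C0 Sg : Matrix (Fin P) (Fin P) ℝ) (hC0 : C0.PosSemidef)
    (hSg : Sg.PosSemidef) (hEq : Sg = VB * M * VBᵀ)
    (hA : (hSg.sqrt * C0 * hSg.sqrt).PosSemidef)
    (hT : (hM.sqrt * (VBᵀ * C0 * VB) * hM.sqrt).PosSemidef) :
    hSg.sqrt = VB * hM.sqrt * VBᵀ ∧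
    hA.sqrt = VB * hT.sqrt * VBᵀ ∧
    hA.sqrt.trace = hT.sqrt.trace := by
  have hct : ∀ (B : Matrix (Fin P) (Fin (P-N)) ℝ), Bᴴ = Bᵀ := fun B => by
    ext i j; simp [conjTranspose_apply]
  have hpsd : ∀ (S : Matrix (Fin (P-N)) (Fin (P-N)) ℝ), S.PosSemidef → (VB * S * VBᵀ).PosSemidef := by
    intro S hS
    have := hS.mul_mul_conjTranspose_same VB
    rwa [hct] at this
  have hsq : ∀ (S : Matrix (Fin (P-N)) (Fin (P-N)) ℝ), (VB * S * VBᵀ)^2 = VB * S^2 * VBᵀ := by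
    intro S
    rw [pow_two, pow_two]
    calc VB * S * VBᵀ * (VB * S * VBᵀ) = VB * S * (VBᵀ * VB) * S * VBᵀ := by
          simp only [Matrix.mul_assoc]
      _ = VB * (S * S) * VBᵀ := by rw [hVB, Matrix.mul_one]; simp only [Matrix.mul_assoc]
  have h1 : hSg.sqrt = VB * hM.sqrt * VBᵀ := by
    refine ((hpsd _ hM.posSemidef_sqrt).eq_sqrt_of_sq_eq hSg ?_).symm
    rw [hsq, hM.sq_sqrt, hEq]
  have hAeq : hSg.sqrt * C0 * hSg.sqrt = VB * (hM.sqrt * (VBᵀ * C0 * VB) * hM.sqrt) * VBᵀ := by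
    rw [h1]
    simp only [Matrix.mul_assoc, hVB]
  have h2 : hA.sqrt = VB * hT.sqrt * VBᵀ := by
    refine ((hpsd _ hT.posSemidef_sqrt).eq_sqrt_of_sq_eq hA ?_).symm
    rw [hsq, hT.sq_sqrt, hAeq]
  refine ⟨h1, h2, ?_⟩
  have key : ∀ X : Matrix (Fin (P-N)) (Fin (P-N)) ℝ, (VB * X * VBᵀ).trace = X.trace := fun X => by
    rw [trace_mul_cycle, hVB, Matrix.one_mul]
  rw [h2, key]
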